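/- For polynomials p and q (with arities in a fixed universe), the morphism set PolyTr(p̄, q̄) between the corresponding constant polynomial trees is in bijection with the terminal [p,q]-coalgebra, i.e., the set of [p,q]-behavior trees, where [p,q] is the Dirichlet internal hom polynomial. -/

import Mathlib

/-- The universe polynomial composed with itself: positions are codes `(I, D)` for
polynomials, directions are position-direction pairs. -/
abbrev UU : PFunctor.{1} :=
  ⟨Σ I : Type, I → Type, fun a => ULift.{1} (Σ i : a.1, a.2 i)⟩

/-- Polynomial trees: elements of the terminal `(u ◁ u)`-coalgebra. -/
abbrev PolyTree : Type 1 := UU.M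

/-- The position set of the root polynomial of a polynomial tree. -/
def PolyTree.pos (p : PolyTree) : Type := p.dest.1.1

/-- The direction set of the root polynomial at position `i`. -/
def PolyTree.dir (p : PolyTree) (i : p.pos) : Type := p.dest.1.2 i

/-- The child tree at a position-direction pair. -/
def PolyTree.rest (p : PolyTree) {i : p.pos} (d : p.dir i) : PolyTree :=
  p.dest.2 ⟨⟨i, d⟩⟩

/-- The hom tower: `H 0 = 1`, `H (n+1) p q = Π i Σ j Π e Σ d, H n (children)`. -/
def H : ℕ → PolyTree → PolyTree → Type
  | 0, _, _ => PUnit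
  | n+1, p, q =>
      ∀ i : p.pos, Σ j : q.pos, ∀ e : q.dir j, Σ d : p.dir i, H n (p.rest d) (q.rest e)

/-- Projection of the hom tower. -/
def projH : ∀ (n : ℕ) (p q : PolyTree), H (n + 1) p q → H n p q
  | 0, _, _, _ => PUnit.unit
  | n+1, _, _, φ => fun i =>
      ⟨(φ i).1, fun e => ⟨((φ i).2 e).1, projH n _ _ ((φ i).2 e).2⟩⟩

/-- The morphism set of `PolyTr`: the limit of the hom tower. -/
def PTHom (p q : PolyTree) : Type :=
  { f : ∀ n, H n p q // ∀ n, projH n p q (f (n + 1)) = f n }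

/-- Levelwise identity morphism. -/
def idH : ∀ (n : ℕ) (p : PolyTree), H n p p
  | 0, _ => PUnit.unit
  | n+1, p => fun i => ⟨i, fun e => ⟨e, idH n (p.rest e)⟩⟩

/-- Levelwise composition of morphisms. -/
def compH : ∀ (n : ℕ) (p q r : PolyTree), H n p q → H n q r → H n p r
  | 0, _, _, _, _, _ => PUnit.unit
  | n+1, _, _, _, φ, ψ => fun i =>
      ⟨(ψ (φ i).1).1, fun f =>
        ⟨((φ i).2 ((ψ (φ i).1).2 f).1).1,
          compH n _ _ _ ((φ i).2 ((ψ (φ i).1).2 f).1).2 ((ψ (φ i).1).2 f).2⟩⟩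

/-- The constant polynomial tree on a polynomial: the same polynomial at every node. -/
def constTree (P : PFunctor.{0}) : PolyTree :=
  PFunctor.M.corec (fun Q : PFunctor.{0} => ⟨⟨Q.A, Q.B⟩, fun _ => Q⟩) P

/-- The Dirichlet internal hom polynomial `[p,q]`. -/
def ihomP (P Q : PFunctor.{0}) : PFunctor.{0} :=
  ⟨∀ i : P.A, Σ j : Q.A, Q.B j → P.B i, fun φ => Σ i : P.A, Q.B (φ i).1⟩


section Aux

open PFunctor PFunctor.Approx

theorem constTree_dest (P : PFunctor.{0}) :
    (constTree P).dest = ⟨⟨P.A, P.B⟩, fun _ => constTree P⟩ := by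
  exact PFunctor.M.dest_corec _ _

theorem rest_eq (P : PFunctor.{0}) {p : PolyTree} (h : p = constTree P)
    {i : p.pos} (d : p.dir i) : p.rest d = constTree P := by
  subst h
  revert i d
  show ∀ (i : (constTree P).dest.1.1) (d : (constTree P).dest.1.2 i),
    (constTree P).dest.2 ⟨⟨i, d⟩⟩ = constTree P
  rw [constTree_dest]
  intro _ _
  rfl

variable {P Q : PFunctor.{0}}

/-- Translate a level-`n` hom into a level-`n` approximation of the `[p,q]`-coalgebra. -/
def toC : ∀ (n : ℕ) (t s : PolyTree), t = constTree P → s = constTree Q →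
    H n t s → CofixA (ihomP P Q) n
  | 0, _, _, _, _, _ => CofixA.continue
  | n+1, _, _, rfl, rfl, φ =>
      CofixA.intro (F := ihomP P Q)
        (fun i => ⟨(φ i).1, fun e => ((φ i).2 e).1⟩)
        (fun x => toC n _ _ (rest_eq P rfl _) (rest_eq Q rfl _)
          (((φ x.1).2 x.2).2))

/-- Translate a level-`n` approximation of the `[p,q]`-coalgebra into a level-`n` hom. -/
def ofC : ∀ (n : ℕ) (t s : PolyTree), t = constTree P → s = constTree Q →
    CofixA (ihomP P Q) n → H n t s
  | 0, _, _, _, _, _ => PUnit.unit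
  | n+1, _, _, rfl, rfl, CofixA.intro a f =>
      fun i => ⟨(a i).1, fun e => ⟨(a i).2 e,
        ofC n _ _ (rest_eq P rfl _) (rest_eq Q rfl _) (f ⟨i, e⟩)⟩⟩

theorem ofC_toC : ∀ (n : ℕ) (t s : PolyTree) (ht : t = constTree P) (hs : s = constTree Q)
    (φ : H n t s), ofC n t s ht hs (toC n t s ht hs φ) = φ
  | 0, _, _, _, _, _ => rfl
  | n+1, _, _, rfl, rfl, φ => by
      funext i
      show (⟨(φ i).1, fun e => ⟨((φ i).2 e).1, _⟩⟩ :
        Σ j : (constTree Q).pos, ∀ e : (constTree Q).dir j,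
          Σ d : (constTree P).dir i,
            H n ((constTree P).rest d) ((constTree Q).rest e)) = φ i
      congr 1
      funext e
      show (⟨((φ i).2 e).1, _⟩ : Σ d : (constTree P).dir i,
        H n ((constTree P).rest d) ((constTree Q).rest e)) = (φ i).2 e
      congr 1
      exact ofC_toC n _ _ _ _ _

theorem toC_ofC : ∀ (n : ℕ) (t s : PolyTree) (ht : t = constTree P) (hs : s = constTree Q)
    (x : CofixA (ihomP P Q) n), toC n t s ht hs (ofC n t s ht hs x) = x
  | 0, _, _, _, _, CofixA.continue => rfl
  | n+1, _, _, rfl, rfl, CofixA.intro a f => by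
      show CofixA.intro (F := ihomP P Q) (fun i => ⟨(a i).1, fun e => (a i).2 e⟩) _ =
        CofixA.intro a f
      congr 1
      funext x
      exact toC_ofC n _ _ _ _ _

theorem truncate_toC : ∀ (n : ℕ) (t s : PolyTree) (ht : t = constTree P) (hs : s = constTree Q)
    (φ : H (n+1) t s),
      truncate (toC (n+1) t s ht hs φ) = toC n t s ht hs (projH n t s φ)
  | 0, _, _, rfl, rfl, _ => rfl
  | n+1, _, _, rfl, rfl, φ => by
      show CofixA.intro _ _ = CofixA.intro _ _
      congr 1
      funext x
      exact truncate_toC n _ _ _ _ _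

theorem projH_ofC (n : ℕ) (t s : PolyTree) (ht : t = constTree P) (hs : s = constTree Q)
    (x : CofixA (ihomP P Q) (n+1)) :
    projH n t s (ofC (n+1) t s ht hs x) = ofC n t s ht hs (truncate x) := by
  have h1 : projH n t s (ofC (n+1) t s ht hs x)
      = ofC n t s ht hs (toC n t s ht hs (projH n t s (ofC (n+1) t s ht hs x))) :=
    (ofC_toC n t s ht hs _).symm
  rw [h1, ← truncate_toC n t s ht hs, toC_ofC]

theorem agree_of_truncate {F : PFunctor.{0}} :
    ∀ {n : ℕ} (x : CofixA F n) (y : CofixA F (n+1)), truncate y = x → Agree x y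
  | 0, _, _, _ => Agree.continu _ _
  | n+1, _, CofixA.intro a f, h => by
      subst h
      exact Agree.intro _ _ fun i => agree_of_truncate _ _ rfl

end Aux

/-- For polynomials `p, q`, the morphism set between the corresponding constant
polynomial trees is in bijection with the terminal `[p,q]`-coalgebra (the M-type
of the Dirichlet internal hom, i.e. the set of `[p,q]`-behavior trees). -/
theorem constant_tree_hom_is_cofree (P Q : PFunctor.{0}) :
    Nonempty (PTHom (constTree P) (constTree Q) ≃ (ihomP P Q).M) := by
  refine ⟨{
    toFun := fun f =>
      ⟨fun n => toC n _ _ rfl rfl (f.1 n), fun n => agree_of_truncate _ _ ?_⟩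
    invFun := fun m =>
      ⟨fun n => ofC n _ _ rfl rfl (m.approx n), fun n => ?_⟩
    left_inv := fun f => ?_
    right_inv := fun m => ?_ }⟩ <;> try skip
  · rw [truncate_toC, f.2 n]
  · rw [projH_ofC, PFunctor.M.truncate_approx]
  · exact Subtype.ext (funext fun n => ofC_toC n _ _ rfl rfl (f.1 n))
  · exact PFunctor.M.ext' _ _ _ fun n => toC_ofC n _ _ rfl rfl (m.approx n)
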